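/- Integral representation of the resolvent: Let n be a positive natural number and B a real n×n matrix such that every complex eigenvalue of B has strictly negative real part. Then B is invertible, the function t ↦ exp(t·B) (matrix exponential) is integrable on [0,∞) entrywise, and ∫₀^∞ exp(t·B) dt = −B⁻¹. -/

import Mathlib

open scoped Matrix
open NormedSpace MeasureTheory Set Filter
open scoped Nat

variable {n : ℕ}

private theorem aux_pow_mulVec (C : Matrix (Fin n) (Fin n) ℂ) (μ : ℂ) (k : ℕ) (v : Fin n → ℂ) :
    ((Matrix.mulVecLin C - μ • (1 : Module.End ℂ (Fin n → ℂ))) ^ k) v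
      = ((C - μ • 1) ^ k) *ᵥ v := by
  have h : Matrix.mulVecLin C - μ • (1 : Module.End ℂ (Fin n → ℂ))
      = Matrix.mulVecLin (C - μ • 1) := by
    refine LinearMap.ext fun w => funext fun i => ?_
    simp only [LinearMap.sub_apply, Matrix.mulVecLin_apply, LinearMap.smul_apply,
      Module.End.one_apply, Matrix.sub_mulVec, Matrix.smul_mulVec, Matrix.one_mulVec]
  rw [h]
  induction k generalizing v with
  | zero => simp [Matrix.mulVecLin_apply]
  | succ k ih =>
      rw [pow_succ, pow_succ, ← Matrix.mulVec_mulVec, Module.End.mul_apply,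
        Matrix.mulVecLin_apply, ih]

/-- key decay estimate for columns of the matrix exponential -/
private theorem aux_decay (C : Matrix (Fin n) (Fin n) ℂ)
    (hC : ∀ μ : ℂ, (∃ v : Fin n → ℂ, v ≠ 0 ∧ C *ᵥ v = μ • v) → μ.re < 0)
    (v : Fin n → ℂ) :
    ∃ c K : ℝ, 0 < c ∧ ∀ t : ℝ, 0 ≤ t →
      ‖(NormedSpace.exp (t • C)) *ᵥ v‖ ≤ K * Real.exp (-(c * t)) := by
  letI : SeminormedRing (Matrix (Fin n) (Fin n) ℂ) := Matrix.linftyOpSemiNormedRing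
  letI : NormedRing (Matrix (Fin n) (Fin n) ℂ) := Matrix.linftyOpNormedRing
  letI : NormedAlgebra ℂ (Matrix (Fin n) (Fin n) ℂ) := Matrix.linftyOpNormedAlgebra
  letI : NormedAlgebra ℚ (Matrix (Fin n) (Fin n) ℂ) := Matrix.linftyOpNormedAlgebra
  set P : Submodule ℂ (Fin n → ℂ) :=
    { carrier := {v | ∃ c K : ℝ, 0 < c ∧ ∀ t : ℝ, 0 ≤ t →
        ‖(NormedSpace.exp (t • C)) *ᵥ v‖ ≤ K * Real.exp (-(c * t))},
      zero_mem' := ⟨1, 0, one_pos, fun t _ => by simp [Matrix.mulVec_zero]⟩,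
      add_mem' := by
        rintro x y ⟨c1, K1, hc1, h1⟩ ⟨c2, K2, hc2, h2⟩
        refine ⟨min c1 c2, |K1| + |K2|, lt_min hc1 hc2, fun t ht => ?_⟩
        rw [Matrix.mulVec_add]
        calc ‖exp (t • C) *ᵥ x + exp (t • C) *ᵥ y‖
            ≤ ‖exp (t • C) *ᵥ x‖ + ‖exp (t • C) *ᵥ y‖ := norm_add_le _ _
          _ ≤ |K1| * Real.exp (-(c1 * t)) + |K2| * Real.exp (-(c2 * t)) := by
              gcongr
              · exact (h1 t ht).trans (by gcongr; exact le_abs_self _)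
              · exact (h2 t ht).trans (by gcongr; exact le_abs_self _)
          _ ≤ |K1| * Real.exp (-(min c1 c2 * t)) + |K2| * Real.exp (-(min c1 c2 * t)) := by
              have e1 : Real.exp (-(c1 * t)) ≤ Real.exp (-(min c1 c2 * t)) :=
                Real.exp_le_exp.2 (by nlinarith [min_le_left c1 c2])
              have e2 : Real.exp (-(c2 * t)) ≤ Real.exp (-(min c1 c2 * t)) :=
                Real.exp_le_exp.2 (by nlinarith [min_le_right c1 c2])
              exact add_le_add (mul_le_mul_of_nonneg_left e1 (abs_nonneg _))
                (mul_le_mul_of_nonneg_left e2 (abs_nonneg _))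
          _ = (|K1| + |K2|) * Real.exp (-(min c1 c2 * t)) := by ring,
      smul_mem' := by
        rintro a x ⟨c, K, hc, h⟩
        refine ⟨c, ‖a‖ * K, hc, fun t ht => ?_⟩
        rw [Matrix.mulVec_smul, norm_smul, mul_assoc]
        exact mul_le_mul_of_nonneg_left (h t ht) (norm_nonneg a) }
  suffices hP : ∀ w, w ∈ P by exact hP v
  have htop := Module.End.iSup_maxGenEigenspace_eq_top (Matrix.mulVecLin C)
  intro w
  have : (⊤ : Submodule ℂ (Fin n → ℂ)) ≤ P := by
    rw [← htop]
    refine iSup_le fun μ => fun x hx => ?_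
    rcases eq_or_ne x 0 with rfl | hx0
    · exact P.zero_mem
    rw [Module.End.mem_maxGenEigenspace] at hx
    obtain ⟨k, hk⟩ := hx
    rw [aux_pow_mulVec] at hk
    set N : Matrix (Fin n) (Fin n) ℂ := C - μ • 1 with hN
    have hk0 : k ≠ 0 := by
      rintro rfl
      rw [pow_zero, Matrix.one_mulVec] at hk
      exact hx0 hk
    have hdet : N.det = 0 := by
      have h1 : (N ^ k).det = 0 := (Matrix.exists_mulVec_eq_zero_iff).1 ⟨x, hx0, hk⟩
      rw [Matrix.det_pow] at h1
      exact (pow_eq_zero_iff hk0).1 h1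
    have hμ : μ.re < 0 := by
      obtain ⟨w, hw0, hw⟩ := (Matrix.exists_mulVec_eq_zero_iff).2 hdet
      refine hC μ ⟨w, hw0, ?_⟩
      rw [hN, Matrix.sub_mulVec, sub_eq_zero, Matrix.smul_mulVec,
        Matrix.one_mulVec] at hw
      exact hw
    set c : ℝ := -μ.re / 2 with hc
    have hc0 : 0 < c := by rw [hc]; linarith
    have hNj : ∀ j, k ≤ j → (N ^ j) *ᵥ x = 0 := by
      intro j hj
      have h1 : N ^ j = N ^ (j - k) * N ^ k := by rw [← pow_add]; congr 1; omega
      rw [h1, ← Matrix.mulVec_mulVec, hk, Matrix.mulVec_zero]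
    have hsplit : ∀ t : ℝ, exp (t • C) = Complex.exp (t • μ) • exp (t • N) := by
      intro t
      have hCeq : t • C = (t • μ) • (1 : Matrix (Fin n) (Fin n) ℂ) + t • N := by
        rw [smul_assoc, hN, smul_sub]
        abel
      have hcomm : Commute ((t • μ) • (1 : Matrix (Fin n) (Fin n) ℂ)) (t • N) :=
        ((Commute.one_left (t • N)).smul_left (t • μ))
      rw [hCeq, Matrix.exp_add_of_commute _ _ hcomm,
        show ((t • μ) • (1 : Matrix (Fin n) (Fin n) ℂ)) = algebraMap ℂ _ (t • μ) from
          (Algebra.algebraMap_eq_smul_one _).symm,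
]
      erw [← algebraMap_exp_comm]
      rw [Algebra.algebraMap_eq_smul_one, smul_mul_assoc, one_mul,
        ← Complex.exp_eq_exp_ℂ]
    have hexpN : ∀ t : ℝ, exp (t • N) *ᵥ x
        = ∑ j ∈ Finset.range k, ((t : ℂ) ^ j * ((j ! : ℂ))⁻¹) • ((N ^ j) *ᵥ x) := by
      intro t
      let L : Matrix (Fin n) (Fin n) ℂ →ₗ[ℂ] (Fin n → ℂ) :=
        { toFun := fun M => M *ᵥ x
          map_add' := fun M N => Matrix.add_mulVec M N x
          map_smul' := fun a M => Matrix.smul_mulVec a M x }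
      have hLc : Continuous L := L.continuous_of_finiteDimensional
      have hsum : Summable (fun j : ℕ => ((j ! : ℂ))⁻¹ • (t • N) ^ j) :=
        expSeries_summable' (t • N)
      have hterm : ∀ j : ℕ, L (((j ! : ℂ))⁻¹ • (t • N) ^ j)
          = ((t : ℂ) ^ j * ((j ! : ℂ))⁻¹) • ((N ^ j) *ᵥ x) := by
        intro j
        show ((((j ! : ℂ))⁻¹ • (t • N) ^ j)) *ᵥ x = _
        rw [smul_pow, Matrix.smul_mulVec, Matrix.smul_mulVec,
          ← algebraMap_smul ℂ (t ^ j) ((N ^ j) *ᵥ x), smul_smul]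
        congr 1
        rw [Complex.coe_algebraMap, Complex.ofReal_pow]
        ring
      calc exp (t • N) *ᵥ x = L (∑' j : ℕ, ((j ! : ℂ))⁻¹ • (t • N) ^ j) := by
            rw [exp_eq_tsum ℂ]
            rfl
        _ = ∑' j : ℕ, L (((j ! : ℂ))⁻¹ • (t • N) ^ j) :=
            ((hsum.hasSum.map L hLc).tsum_eq).symm
        _ = ∑ j ∈ Finset.range k, ((t : ℂ) ^ j * ((j ! : ℂ))⁻¹) • ((N ^ j) *ᵥ x) := by
            rw [tsum_congr hterm]
            refine tsum_eq_sum fun j hj => ?_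
            rw [hNj j (le_of_not_gt (by simpa using hj)), smul_zero]
    have hkey : ∀ (j : ℕ) (t : ℝ), 0 ≤ t →
        Real.exp (t * μ.re) * (t ^ j * ((j ! : ℝ))⁻¹) ≤ c⁻¹ ^ j * Real.exp (-(c * t)) := by
      intro j t ht
      have h1 : (c * t) ^ j / (j !) ≤ Real.exp (c * t) :=
        Real.pow_div_factorial_le_exp (x := c * t) (mul_nonneg hc0.le ht) j
      have h2 : t ^ j * ((j ! : ℝ))⁻¹ ≤ c⁻¹ ^ j * Real.exp (c * t) := by
        have : t ^ j * ((j ! : ℝ))⁻¹ = c⁻¹ ^ j * ((c * t) ^ j / (j !)) := by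
          field_simp [mul_pow, hc0.ne']
          try ring
          rw [mul_assoc, ← mul_pow, mul_inv_cancel₀ hc0.ne', one_pow, mul_one]
        rw [this]
        exact mul_le_mul_of_nonneg_left h1 (by positivity)
      calc Real.exp (t * μ.re) * (t ^ j * ((j ! : ℝ))⁻¹)
          ≤ Real.exp (t * μ.re) * (c⁻¹ ^ j * Real.exp (c * t)) :=
            mul_le_mul_of_nonneg_left h2 (Real.exp_pos _).le
        _ = c⁻¹ ^ j * Real.exp (t * μ.re + c * t) := by rw [Real.exp_add]; ring
        _ = c⁻¹ ^ j * Real.exp (-(c * t)) := by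
            congr 2
            rw [hc]; ring
    refine ⟨c, ∑ j ∈ Finset.range k, c⁻¹ ^ j * ‖(N ^ j) *ᵥ x‖, hc0, fun t ht => ?_⟩
    rw [hsplit t, Matrix.smul_mulVec, norm_smul, hexpN t]
    have hnorm : ‖Complex.exp (t • μ)‖ = Real.exp (t * μ.re) := by
      rw [Complex.norm_exp]
      congr 1
      simp [Complex.smul_re]
    rw [hnorm, Finset.sum_mul]
    calc Real.exp (t * μ.re) * ‖∑ j ∈ Finset.range k, ((t : ℂ) ^ j * ((j ! : ℂ))⁻¹) • ((N ^ j) *ᵥ x)‖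
        ≤ Real.exp (t * μ.re) * ∑ j ∈ Finset.range k, (t ^ j * ((j ! : ℝ))⁻¹) * ‖(N ^ j) *ᵥ x‖ := by
          refine mul_le_mul_of_nonneg_left ?_ (Real.exp_pos _).le
          refine (norm_sum_le _ _).trans (Finset.sum_le_sum fun j _ => ?_)
          rw [norm_smul]
          refine mul_le_mul_of_nonneg_right ?_ (norm_nonneg _)
          rw [norm_mul, norm_pow, norm_inv]
          refine le_of_eq ?_
          congr 1
          · rw [Complex.norm_real, Real.norm_eq_abs, abs_of_nonneg ht]
          · rw [Complex.norm_natCast]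
      _ = ∑ j ∈ Finset.range k, Real.exp (t * μ.re) * (t ^ j * ((j ! : ℝ))⁻¹) * ‖(N ^ j) *ᵥ x‖ := by
          rw [Finset.mul_sum]; congr 1; funext j; ring
      _ ≤ ∑ j ∈ Finset.range k, c⁻¹ ^ j * Real.exp (-(c * t)) * ‖(N ^ j) *ᵥ x‖ :=
          Finset.sum_le_sum fun j _ =>
            mul_le_mul_of_nonneg_right (hkey j t ht) (norm_nonneg _)
      _ = ∑ j ∈ Finset.range k, c⁻¹ ^ j * ‖(N ^ j) *ᵥ x‖ * Real.exp (-(c * t)) := by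
          congr 1; funext j; ring
  exact this trivial


/-- A complex number `μ` is an eigenvalue of the real matrix `M`
(via its complexification). -/
def Matrix.IsComplexEigenvalue {V : Type*} [Fintype V] (M : Matrix V V ℝ) (μ : ℂ) : Prop :=
  ∃ v : V → ℂ, v ≠ 0 ∧ (M.map (Complex.ofReal)).mulVec v = μ • v

/-- **Integral representation of the resolvent.** If every complex eigenvalue
of the real `n×n` matrix `B` (with `n > 0`) has strictly negative real part,
then `B` is invertible, `t ↦ exp(t B)` is entrywise integrable on `(0,∞)`, and
`∫₀^∞ exp(t B) dt = −B⁻¹` entrywise. -/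
theorem resolvent_integral_representation (n : ℕ) (hn : 0 < n)
    (B : Matrix (Fin n) (Fin n) ℝ)
    (hB : ∀ μ : ℂ, B.IsComplexEigenvalue μ → μ.re < 0) :
    IsUnit B.det ∧
    (∀ i j : Fin n,
      MeasureTheory.IntegrableOn (fun t : ℝ => NormedSpace.exp (t • B) i j) (Set.Ioi 0)) ∧
    ∀ i j : Fin n,
      (∫ t in Set.Ioi (0 : ℝ), NormedSpace.exp (t • B) i j) = (-B⁻¹) i j := by
  classical
  set C : Matrix (Fin n) (Fin n) ℂ := B.map Complex.ofReal with hCdef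
  have hC : ∀ μ : ℂ, (∃ v : Fin n → ℂ, v ≠ 0 ∧ C *ᵥ v = μ • v) → μ.re < 0 := fun μ h => hB μ h
  have hdet : IsUnit B.det := by
    rw [isUnit_iff_ne_zero]
    intro h0
    have hdC : C.det = 0 := by
      rw [hCdef]
      calc (B.map Complex.ofReal).det = Complex.ofRealHom B.det := by
            rw [RingHom.map_det]; rfl
        _ = 0 := by simp [h0]
    obtain ⟨v, hv0, hv⟩ := Matrix.exists_mulVec_eq_zero_iff.2 hdC
    have := hC 0 ⟨v, hv0, by simpa using hv⟩
    simp at this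
  have hmap : ∀ t : ℝ, (NormedSpace.exp (t • B)).map Complex.ofReal
      = NormedSpace.exp (t • C) := by
    intro t
    letI : SeminormedRing (Matrix (Fin n) (Fin n) ℝ) := Matrix.linftyOpSemiNormedRing
    letI : NormedRing (Matrix (Fin n) (Fin n) ℝ) := Matrix.linftyOpNormedRing
    letI : NormedAlgebra ℝ (Matrix (Fin n) (Fin n) ℝ) := Matrix.linftyOpNormedAlgebra
    letI : SeminormedRing (Matrix (Fin n) (Fin n) ℂ) := Matrix.linftyOpSemiNormedRing
    letI : NormedRing (Matrix (Fin n) (Fin n) ℂ) := Matrix.linftyOpNormedRing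
    letI : NormedAlgebra ℝ (Matrix (Fin n) (Fin n) ℂ) := Matrix.linftyOpNormedAlgebra
    letI : NormedAlgebra ℂ (Matrix (Fin n) (Fin n) ℂ) := Matrix.linftyOpNormedAlgebra
    letI : NormedAlgebra ℚ (Matrix (Fin n) (Fin n) ℝ) := Matrix.linftyOpNormedAlgebra
    letI : NormedAlgebra ℚ (Matrix (Fin n) (Fin n) ℂ) := Matrix.linftyOpNormedAlgebra
    have hFc : Continuous fun M : Matrix (Fin n) (Fin n) ℝ => M.map Complex.ofReal := by
      refine continuous_pi fun i => continuous_pi fun j => ?_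
      exact Complex.continuous_ofReal.comp ((continuous_apply j).comp (continuous_apply i))
    have h1 : (exp (t • B)).map Complex.ofReal
        = exp ((t • B).map Complex.ofReal) :=
      map_exp (Complex.ofRealHom.mapMatrix
        (m := Fin n) : Matrix (Fin n) (Fin n) ℝ →+* Matrix (Fin n) (Fin n) ℂ) hFc (t • B)
    have h2 : (t • B).map Complex.ofReal = t • C := by
      ext i j
      simp [hCdef]
    rw [h1, h2]
  have hcol : ∀ j : Fin n, ∃ c K : ℝ, 0 < c ∧ ∀ t : ℝ, 0 ≤ t → ∀ i : Fin n,
      |NormedSpace.exp (t • B) i j| ≤ K * Real.exp (-(c * t)) := by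
    intro j
    obtain ⟨c, K, hc, h⟩ := aux_decay C hC (Pi.single j 1)
    refine ⟨c, K, hc, fun t ht i => ?_⟩
    have e1 : (Complex.ofReal (NormedSpace.exp (t • B) i j)) = (exp (t • C)) i j := by
      rw [← hmap t]; rfl
    have e2 : (exp (t • C)) *ᵥ Pi.single j 1 = fun i => (exp (t • C)) i j := by
      funext i
      simp [Matrix.mulVec_single]
    calc |NormedSpace.exp (t • B) i j| = ‖(exp (t • C)) i j‖ := by
          rw [← e1, Complex.norm_real, Real.norm_eq_abs]
      _ ≤ ‖(exp (t • C)) *ᵥ Pi.single j 1‖ := by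
          rw [e2]
          exact norm_le_pi_norm (fun i => exp (t • C) i j : Fin n → ℂ) i
      _ ≤ K * Real.exp (-(c * t)) := h t ht
  have hcont : ∀ i j : Fin n, Continuous fun t : ℝ => NormedSpace.exp (t • B) i j := by
    intro i j
    letI : SeminormedRing (Matrix (Fin n) (Fin n) ℝ) := Matrix.linftyOpSemiNormedRing
    letI : NormedRing (Matrix (Fin n) (Fin n) ℝ) := Matrix.linftyOpNormedRing
    letI : NormedAlgebra ℝ (Matrix (Fin n) (Fin n) ℝ) := Matrix.linftyOpNormedAlgebra
    letI : NormedAlgebra ℚ (Matrix (Fin n) (Fin n) ℝ) := Matrix.linftyOpNormedAlgebra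
    have h1 : Continuous fun t : ℝ => exp (t • B) :=
      exp_continuous.comp (continuous_id.smul continuous_const)
    exact (continuous_apply j).comp ((continuous_apply i).comp h1)
  have hint : ∀ i j : Fin n,
      MeasureTheory.IntegrableOn (fun t : ℝ => NormedSpace.exp (t • B) i j) (Set.Ioi 0) := by
    intro i j
    obtain ⟨c, K, hc, h⟩ := hcol j
    refine MeasureTheory.Integrable.mono' (g := fun t => K * Real.exp (-(c * t))) ?_ ?_ ?_
    · simpa [neg_mul] using (exp_neg_integrableOn_Ioi 0 hc).const_mul K
    · exact ((hcont i j).aestronglyMeasurable).restrict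
    · filter_upwards [MeasureTheory.ae_restrict_mem measurableSet_Ioi] with t ht
      rw [Real.norm_eq_abs]
      exact h t (le_of_lt ht) i
  have hderiv : ∀ (i j : Fin n) (t : ℝ),
      HasDerivAt (fun t : ℝ => (B⁻¹ * NormedSpace.exp (t • B)) i j)
        (NormedSpace.exp (t • B) i j) t := by
    intro i j t
    letI : SeminormedRing (Matrix (Fin n) (Fin n) ℝ) := Matrix.linftyOpSemiNormedRing
    letI : NormedRing (Matrix (Fin n) (Fin n) ℝ) := Matrix.linftyOpNormedRing
    letI : NormedAlgebra ℝ (Matrix (Fin n) (Fin n) ℝ) := Matrix.linftyOpNormedAlgebra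
    have h1 : HasDerivAt (fun t : ℝ => exp (t • B)) (B * exp (t • B)) t :=
      hasDerivAt_exp_smul_const' B t
    have h2 : HasDerivAt (fun t : ℝ => B⁻¹ * exp (t • B)) (B⁻¹ * (B * exp (t • B))) t :=
      h1.const_mul B⁻¹
    rw [← Matrix.mul_assoc, Matrix.nonsing_inv_mul B hdet, Matrix.one_mul] at h2
    let E : Matrix (Fin n) (Fin n) ℝ →ₗ[ℝ] ℝ :=
      { toFun := fun M => M i j, map_add' := fun _ _ => rfl, map_smul' := fun _ _ => rfl }
    have h3 := (LinearMap.toContinuousLinearMap E).hasFDerivAt.comp_hasDerivAt t h2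
    exact h3
  have htend : ∀ i j : Fin n,
      Filter.Tendsto (fun t : ℝ => (B⁻¹ * NormedSpace.exp (t • B)) i j)
        Filter.atTop (nhds 0) := by
    intro i j
    obtain ⟨c, K, hc, h⟩ := hcol j
    have hg : Filter.Tendsto (fun t : ℝ => (∑ l, |B⁻¹ i l|) * (K * Real.exp (-(c * t))))
        Filter.atTop (nhds 0) := by
      have h0 : Filter.Tendsto (fun t : ℝ => Real.exp (-(c * t))) Filter.atTop (nhds 0) := by
        refine Real.tendsto_exp_neg_atTop_nhds_zero.comp ?_
        exact Filter.tendsto_id.const_mul_atTop hc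
      simpa using (h0.const_mul K).const_mul (∑ l, |B⁻¹ i l|)
    refine squeeze_zero_norm' ?_ hg
    filter_upwards [Filter.eventually_ge_atTop (0 : ℝ)] with t ht
    rw [Real.norm_eq_abs, Matrix.mul_apply, Finset.sum_mul]
    refine (Finset.abs_sum_le_sum_abs _ _).trans (Finset.sum_le_sum fun l _ => ?_)
    rw [abs_mul]
    exact mul_le_mul_of_nonneg_left (h t ht l) (abs_nonneg _)
  refine ⟨hdet, hint, fun i j => ?_⟩
  have hFTC := MeasureTheory.integral_Ioi_of_hasDerivAt_of_tendsto
    (f := fun t : ℝ => (B⁻¹ * NormedSpace.exp (t • B)) i j)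
    (f' := fun t : ℝ => NormedSpace.exp (t • B) i j) (a := 0) (m := 0)
    ((hderiv i j 0).continuousAt.continuousWithinAt) (fun x _ => hderiv i j x)
    (hint i j) (htend i j)
  rw [hFTC]
  simp [Matrix.neg_apply, exp_zero, Matrix.mul_one]
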